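/- Let p ≥ 1 and N ≥ 1 be integers and θ a real number. Then (1/N)·∑_{k=0}^{N−1} cos^{2p}(θ + 2kπ/N) = ∑_{m=0, N | 2m}^{p} a_{2m,p}·cos(2mθ), where a_{0,p} = C(2p,p)/2^{2p} and a_{2m,p} = C(2p,p+m)/2^{2p−1} for 1 ≤ m ≤ p. -/

import Mathlib

open Finset

lemma linC (p : ℕ) (x : ℂ) :
    Complex.cos x ^ (2*p) * 2^(2*p) =
      ∑ m ∈ range (p+1),
        (if m = 0 then (Nat.choose (2*p) p : ℂ) else 2 * Nat.choose (2*p) (p+m)) *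
          Complex.cos (2*(m:ℂ)*x) := by
  set a := Complex.exp (x * Complex.I) with ha
  set b := Complex.exp (-x * Complex.I) with hb
  have hab : a * b = 1 := by
    rw [ha, hb, ← Complex.exp_add]
    ring_nf
    exact Complex.exp_zero
  set f : ℕ → ℂ := fun j => a^j * b^(2*p - j) * Nat.choose (2*p) j with hf
  have habn : ∀ n : ℕ, (a*b)^n = 1 := fun n => by rw [hab, one_pow]
  have h2cos : ∀ n : ℕ, a^n + b^n = 2 * Complex.cos (n * x) := by
    intro n
    rw [ha, hb, ← Complex.exp_nat_mul, ← Complex.exp_nat_mul, Complex.two_cos]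
    ring_nf
  have hLHS : Complex.cos x ^ (2*p) * 2^(2*p) = ∑ j ∈ range (2*p+1), f j := by
    rw [← mul_pow, mul_comm (Complex.cos x) (2:ℂ), Complex.two_cos, add_pow]
  rw [hLHS]
  have hsplit : ∑ j ∈ range (2*p+1), f j
      = ∑ j ∈ range p, f j + ∑ j ∈ range (p+1), f (p + j) := by
    rw [show 2*p+1 = p + (p+1) by ring, Finset.sum_range_add]
  rw [hsplit]
  rw [← Finset.sum_range_reflect (fun j => f j) p]
  rw [Finset.sum_range_succ' (fun j => f (p + j))]
  simp only [add_zero]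
  have hfp : f p = Nat.choose (2*p) p := by
    have : a^p * b^(2*p - p) = 1 := by
      rw [show 2*p - p = p by omega, ← mul_pow, habn]
    rw [hf]; dsimp only; rw [this, one_mul]
  have hpair : ∀ i ∈ range p, f (p - 1 - i) + f (p + (i+1))
      = (Nat.choose (2*p) (p+1+i) : ℂ) * (a^(2*(i+1)) + b^(2*(i+1))) := by
    intro i hi
    rw [mem_range] at hi
    have e1 : 2*p - (p - 1 - i) = p + 1 + i := by omega
    have e2 : 2*p - (p + (i+1)) = p - 1 - i := by omega
    have hc : (Nat.choose (2*p) (p-1-i) : ℂ) = Nat.choose (2*p) (p+1+i) := by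
      rw [show p - 1 - i = 2*p - (p+1+i) by omega, Nat.choose_symm (by omega)]
    have ea : a^(p+1+i) * b^(p - 1 - i) = a^(2*(i+1)) := by
      rw [show p + 1 + i = 2*(i+1) + (p - 1 - i) by omega, pow_add, mul_assoc,
        ← mul_pow, habn, mul_one]
    have eb : a^(p - 1 - i) * b^(p + 1 + i) = b^(2*(i+1)) := by
      rw [show p + 1 + i = 2*(i+1) + (p - 1 - i) by omega, pow_add, ← mul_assoc,
        mul_comm (a ^ (p-1-i)), mul_assoc, ← mul_pow, habn, mul_one]
    rw [hf]; dsimp only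
    rw [e1, e2, hc, show p + (i+1) = p + 1 + i by omega, ea, eb]
    ring
  have hsum : (∑ j ∈ range p, f (p-1-j)) + ((∑ k ∈ range p, f (p+(k+1))) + f p)
      = f p + ∑ i ∈ range p, (f (p-1-i) + f (p+(i+1))) := by
    rw [Finset.sum_add_distrib]; ring
  rw [hsum, Finset.sum_congr rfl hpair, hfp, Finset.sum_range_succ' _ p]
  have hterm : ∀ i ∈ range p,
      (if i + 1 = 0 then (Nat.choose (2*p) p : ℂ) else 2 * Nat.choose (2*p) (p+(i+1))) *
          Complex.cos (2*((i:ℂ)+1)*x)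
      = (Nat.choose (2*p) (p+1+i) : ℂ) * (a^(2*(i+1)) + b^(2*(i+1))) := by
    intro i hi
    rw [if_neg (Nat.succ_ne_zero _), h2cos, show p + (i+1) = p + 1 + i by omega]
    push_cast
    ring_nf
  simp only [Nat.cast_add, Nat.cast_one]
  rw [Finset.sum_congr rfl hterm]
  simp
  exact add_comm _ _

lemma avg (N m : ℕ) (hN : 1 ≤ N) (α : ℝ) :
    ∑ k ∈ range N, Real.cos (α + k * (4*m*Real.pi/N)) =
      if N ∣ 2*m then (N:ℝ) * Real.cos α else 0 := by
  have hN0 : (N:ℝ) ≠ 0 := by positivity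
  have hNC : (N:ℂ) ≠ 0 := by exact_mod_cast hN0
  set β : ℝ := 4*m*Real.pi/N with hβ
  set z : ℂ := Complex.exp (β * Complex.I) with hz
  have hsum : ∑ k ∈ range N, Real.cos (α + k * β)
      = (Complex.exp (α * Complex.I) * ∑ k ∈ range N, z^k).re := by
    rw [Finset.mul_sum, Complex.re_sum]
    apply Finset.sum_congr rfl
    intro k _
    rw [hz, ← Complex.exp_nat_mul, ← Complex.exp_add,
      ← Complex.exp_ofReal_mul_I_re (α + k*β)]
    congr 2
    push_cast
    ring
  by_cases hdvd : N ∣ 2*m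
  · obtain ⟨t, ht⟩ := hdvd
    have htr : 2*(m:ℝ) = N*t := by exact_mod_cast ht
    have hβt : β = t * (2*Real.pi) := by
      rw [hβ]
      field_simp
      linear_combination 2*htr
    have hz1 : z = 1 := by
      rw [hz, hβt, show ((t * (2*Real.pi) : ℝ) : ℂ) * Complex.I
        = (t:ℕ) * (2*(Real.pi:ℂ)*Complex.I) by push_cast; ring,
        Complex.exp_nat_mul_two_pi_mul_I]
    rw [if_pos ⟨t, ht⟩, hsum, hz1]
    simp [Complex.mul_re, Complex.exp_ofReal_mul_I_re]
    ring
  · have hzN : z^N = 1 := by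
      rw [hz, ← Complex.exp_nat_mul,
        show (N:ℂ) * ((β:ℝ) * Complex.I) = (2*m : ℕ) * (2*(Real.pi:ℂ)*Complex.I) by
          rw [hβ]; push_cast; field_simp; ring,
        Complex.exp_nat_mul_two_pi_mul_I]
    have hz1 : z ≠ 1 := by
      intro h
      rw [hz, Complex.exp_eq_one_iff] at h
      obtain ⟨n, hn⟩ := h
      have h2 : ((β:ℝ) : ℂ) * Complex.I = (((n:ℝ)*(2*Real.pi) : ℝ) : ℂ) * Complex.I := by
        rw [hn]; push_cast; ring
      have h3 : β = (n:ℝ)*(2*Real.pi) := by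
        exact_mod_cast mul_right_cancel₀ Complex.I_ne_zero h2
      rw [hβ] at h3
      field_simp at h3
      have h5 : (2*(m:ℝ)) * (2*Real.pi) = ((n:ℝ)*N) * (2*Real.pi) := by
        linear_combination Real.pi * h3
      have h6 : (2*(m:ℝ)) = (n:ℝ)*N := mul_right_cancel₀ (by positivity) h5
      have h6' : (2*(m:ℝ)) = (N:ℝ)*(n:ℝ) := by linear_combination h6
      have h7 : (2*m : ℤ) = N * n := by exact_mod_cast h6'
      exact hdvd (Int.natCast_dvd_natCast.mp ⟨n, h7⟩)
    rw [if_neg hdvd, hsum, geom_sum_eq hz1, hzN]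
    simp

lemma lin (p : ℕ) (hp : 1 ≤ p) (x : ℝ) :
    Real.cos x ^ (2*p) = ∑ m ∈ range (p+1),
      (if m = 0 then (Nat.choose (2*p) p : ℝ) / 2^(2*p)
       else (Nat.choose (2*p) (p+m) : ℝ) / 2^(2*p-1)) * Real.cos (2*(m:ℝ)*x) := by
  have h2 : ((2:ℂ))^(2*p) ≠ 0 := pow_ne_zero _ two_ne_zero
  have h := linC p (x : ℂ)
  rw [← Complex.ofReal_inj]
  push_cast [Complex.ofReal_cos, apply_ite (fun r : ℝ => (r : ℂ))]
  rw [← eq_div_iff h2] at h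
  rw [h, Finset.sum_div]
  apply Finset.sum_congr rfl
  intro m _
  by_cases hm : m = 0
  · simp [hm]
  · rw [if_neg hm, if_neg hm,
      show (2:ℂ)^(2*p) = 2^(2*p-1) * 2 by rw [← pow_succ]; congr 1; omega]
    have hne : (2:ℂ)^(2*p-1) ≠ 0 := pow_ne_zero _ two_ne_zero
    field_simp

open Finset in
theorem even_power_linearization (p N : ℕ) (hp : 1 ≤ p) (hN : 1 ≤ N) (θ : ℝ) :
    (1 / (N : ℝ)) * ∑ k ∈ range N, Real.cos (θ + 2 * k * Real.pi / N) ^ (2 * p) =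
      ∑ m ∈ (range (p + 1)).filter (fun m => N ∣ 2 * m),
        (if m = 0 then (Nat.choose (2 * p) p : ℝ) / 2 ^ (2 * p)
         else (Nat.choose (2 * p) (p + m) : ℝ) / 2 ^ (2 * p - 1)) *
          Real.cos (2 * (m : ℝ) * θ) := by
  have hN0 : (N:ℝ) ≠ 0 := by positivity
  have step1 : ∀ k ∈ range N, Real.cos (θ + 2 * k * Real.pi / N) ^ (2 * p)
      = ∑ m ∈ range (p+1),
        (if m = 0 then (Nat.choose (2*p) p : ℝ) / 2^(2*p)
         else (Nat.choose (2*p) (p+m) : ℝ) / 2^(2*p-1)) *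
          Real.cos (2*(m:ℝ)*θ + k * (4*m*Real.pi/N)) := by
    intro k _
    rw [lin p hp (θ + 2 * k * Real.pi / N)]
    apply Finset.sum_congr rfl
    intro m _
    congr 2
    field_simp
    ring
  rw [Finset.sum_congr rfl step1, Finset.sum_comm]
  rw [Finset.mul_sum]
  have step2 : ∀ m ∈ range (p+1),
      (1 / (N:ℝ)) * ∑ k ∈ range N,
        (if m = 0 then (Nat.choose (2*p) p : ℝ) / 2^(2*p)
         else (Nat.choose (2*p) (p+m) : ℝ) / 2^(2*p-1)) *
          Real.cos (2*(m:ℝ)*θ + k * (4*m*Real.pi/N))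
      = if N ∣ 2*m then
          (if m = 0 then (Nat.choose (2*p) p : ℝ) / 2^(2*p)
           else (Nat.choose (2*p) (p+m) : ℝ) / 2^(2*p-1)) * Real.cos (2*(m:ℝ)*θ)
        else 0 := by
    intro m _
    rw [← Finset.mul_sum, avg N m hN (2*(m:ℝ)*θ)]
    by_cases hdvd : N ∣ 2*m
    · rw [if_pos hdvd, if_pos hdvd]
      field_simp
    · rw [if_neg hdvd, if_neg hdvd]
      ring
  rw [Finset.sum_congr rfl step2, Finset.sum_filter]
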